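/- arXiv:1806.07981 — 7 statements merged into one kernel-verified Lean document; each statement's English description precedes it below -/
import Mathlib

section
/- For every non-square integer m > 1, there exist infinitely many pairs of positive integers (r, s) such that s(s+1)/2 = m · r(r+1)/2, i.e., infinitely many triangular numbers are m times another triangular number. -/
/-- Auxiliary sequence of solutions to `x^2 - m*y^2 = 1 - m`, generated from
the trivial solution `(1,1)` by multiplying with a Pell solution `(U, V)`. -/
def pseq (m U V : ℤ) : ℕ → ℤ × ℤ
  | 0 => (1, 1)
  | n + 1 =>
      (U * (pseq m U V n).1 + m * V * (pseq m U V n).2,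
       V * (pseq m U V n).1 + U * (pseq m U V n).2)

/-- For every non-square integer m > 1, infinitely many pairs of positive
integers (r, s) satisfy s(s+1)/2 = m · r(r+1)/2. -/
theorem stmt_0 (m : ℤ) (hm : 1 < m) (hns : ¬ IsSquare m) :
    {p : ℤ × ℤ | 0 < p.1 ∧ 0 < p.2 ∧
      p.2 * (p.2 + 1) = m * (p.1 * (p.1 + 1))}.Infinite := by
  obtain ⟨u, v, huv, hv⟩ := Pell.exists_of_not_isSquare (by linarith) hns
  have hv1 : 1 ≤ v ^ 2 := by
    have h := abs_pos.mpr hv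
    nlinarith [sq_abs v]
  have hu2 : u ^ 2 = 1 + m * v ^ 2 := by linarith
  have hua : 2 ≤ |u| := by
    by_contra h
    push_neg at h
    have h1 : |u| ≤ 1 := by omega
    have h2 : u ^ 2 ≤ 1 := by nlinarith [sq_abs u, abs_nonneg u]
    nlinarith
  have hva : 1 ≤ |v| := by
    have := abs_pos.mpr hv
    omega
  obtain ⟨U, V, hPell, hoU, heV, hU3, hV2⟩ :
      ∃ U V : ℤ, U ^ 2 - m * V ^ 2 = 1 ∧ Odd U ∧ Even V ∧ 3 ≤ U ∧ 2 ≤ V := by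
    refine ⟨1 + 2 * m * v ^ 2, 2 * |u| * |v|, ?_, ⟨m * v ^ 2, by ring⟩,
      ⟨|u| * |v|, by ring⟩, by nlinarith, by nlinarith⟩
    have h1 : (2 * |u| * |v|) ^ 2 = 4 * (u ^ 2 * v ^ 2) := by
      rw [mul_pow, mul_pow, sq_abs, sq_abs]; ring
    rw [h1]
    nlinarith
  -- Invariant of the sequence
  have inv : ∀ n, (pseq m U V n).1 ^ 2 - m * (pseq m U V n).2 ^ 2 = 1 - m ∧
      Odd (pseq m U V n).1 ∧ Odd (pseq m U V n).2 ∧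
      1 ≤ (pseq m U V n).1 ∧ 1 ≤ (pseq m U V n).2 := by
    intro n
    induction n with
    | zero => exact ⟨by simp [pseq], by simp [pseq], by simp [pseq],
        by simp [pseq], by simp [pseq]⟩
    | succ n ih =>
      obtain ⟨heq, hox, hoy, hx, hy⟩ := ih
      refine ⟨?_, ?_, ?_, ?_, ?_⟩
      · simp only [pseq]
        linear_combination ((pseq m U V n).1 ^ 2 - m * (pseq m U V n).2 ^ 2) * hPell + heq
      · simp only [pseq]
        exact (hoU.mul hox).add_even ((heV.mul_left m).mul_right _)
      · simp only [pseq]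
        exact (heV.mul_right _).add_odd (hoU.mul hoy)
      · simp only [pseq]
        nlinarith [mul_le_mul hU3 hx (by norm_num : (0:ℤ) ≤ 1) (by linarith : (0:ℤ) ≤ U), mul_nonneg (mul_nonneg (by linarith : (0:ℤ) ≤ m) (by linarith : (0:ℤ) ≤ V)) (by linarith : (0:ℤ) ≤ (pseq m U V n).2)]
      · simp only [pseq]
        nlinarith [mul_le_mul hV2 hx (by norm_num : (0:ℤ) ≤ 1) (by linarith : (0:ℤ) ≤ V), mul_le_mul_of_nonneg_right hU3 (by linarith : (0:ℤ) ≤ (pseq m U V n).2)]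
  -- Strict growth of the second coordinate
  have grow : ∀ n, (pseq m U V n).2 < (pseq m U V (n + 1)).2 := by
    intro n
    obtain ⟨heq, hox, hoy, hx, hy⟩ := inv n
    simp only [pseq]
    nlinarith [mul_le_mul hV2 hx (by norm_num : (0:ℤ) ≤ 1) (by linarith : (0:ℤ) ≤ V), mul_le_mul_of_nonneg_right hU3 (by linarith : (0:ℤ) ≤ (pseq m U V n).2)]
  have smono : StrictMono fun n => (pseq m U V n).2 :=
    strictMono_nat_of_lt_succ grow
  -- Components of the successors are at least 3
  have big : ∀ n, 3 ≤ (pseq m U V (n + 1)).1 ∧ 3 ≤ (pseq m U V (n + 1)).2 := by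
    intro n
    obtain ⟨heq, hox, hoy, hx, hy⟩ := inv n
    constructor
    · simp only [pseq]
      nlinarith [mul_le_mul hU3 hx (by norm_num : (0:ℤ) ≤ 1) (by linarith : (0:ℤ) ≤ U), mul_nonneg (mul_nonneg (by linarith : (0:ℤ) ≤ m) (by linarith : (0:ℤ) ≤ V)) (by linarith : (0:ℤ) ≤ (pseq m U V n).2)]
    · simp only [pseq]
      nlinarith [mul_le_mul hV2 hx (by norm_num : (0:ℤ) ≤ 1) (by linarith : (0:ℤ) ≤ V), mul_le_mul_of_nonneg_right hU3 (by linarith : (0:ℤ) ≤ (pseq m U V n).2)]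
  apply Set.infinite_of_injective_forall_mem
    (f := fun n : ℕ => (((pseq m U V (n + 1)).2 - 1) / 2, ((pseq m U V (n + 1)).1 - 1) / 2))
  · intro a b hab
    simp only [Prod.mk.injEq] at hab
    obtain ⟨ka, hka⟩ := (inv (a + 1)).2.2.1
    obtain ⟨kb, hkb⟩ := (inv (b + 1)).2.2.1
    have : (pseq m U V (a + 1)).2 = (pseq m U V (b + 1)).2 := by omega
    have := smono.injective this
    omega
  · intro n
    obtain ⟨heq, hox, hoy, hx, hy⟩ := inv (n + 1)
    obtain ⟨hx3, hy3⟩ := big n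
    obtain ⟨s, hs⟩ := hox
    obtain ⟨r, hr⟩ := hoy
    have hrs : ((pseq m U V (n + 1)).2 - 1) / 2 = r ∧
        ((pseq m U V (n + 1)).1 - 1) / 2 = s := by omega
    refine ⟨?_, ?_, ?_⟩
    · simp only; omega
    · simp only; omega
    · simp only [hrs.1, hrs.2]
      rw [hs, hr] at heq
      have h4 : 4 * (s * (s + 1)) = 4 * (m * (r * (r + 1))) := by linear_combination heq
      exact mul_left_cancel₀ (by norm_num : (4:ℤ) ≠ 0) h4
end

section
/- For coprime square-free integers a > b ≥ 1 with ab not a perfect square, the equation a · r(r+1)/2 = b · s(s+1)/2 has infinitely many solutions in positive integers r, s. -/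
/-- Iterating the Pell automorphism on the solution (0,0). -/
def pellSeq (a b P Q R : ℤ) : ℕ → ℤ × ℤ
  | 0 => (0, 0)
  | n + 1 =>
    let p := pellSeq a b P Q R n
    ((2 * P + 1) * p.1 + 2 * Q * p.2 + P + Q,
     2 * R * p.1 + (2 * P + 1) * p.2 + P + R)

/-- For coprime square-free integers a > b ≥ 1 with ab not a perfect square,
a · r(r+1)/2 = b · s(s+1)/2 has infinitely many positive solutions. -/
theorem stmt_7 (a b : ℤ) (hab : b < a) (hb : 1 ≤ b)
    (hcop : IsCoprime a b) (hsa : Squarefree a) (hsb : Squarefree b)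
    (hns : ¬ IsSquare (a * b)) :
    {p : ℤ × ℤ | 0 < p.1 ∧ 0 < p.2 ∧
      a * (p.1 * (p.1 + 1)) = b * (p.2 * (p.2 + 1))}.Infinite := by
  have ha : 1 < a := lt_of_le_of_lt hb hab
  have hd0 : 0 < a * b := mul_pos (by linarith) (by linarith)
  obtain ⟨u, v, huv, hv⟩ := Pell.exists_of_not_isSquare hd0 hns
  -- pass to |u|, |v|
  set u0 : ℤ := |u| with hu0
  set v0 : ℤ := |v| with hv0
  have huv0 : u0 ^ 2 - (a * b) * v0 ^ 2 = 1 := by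
    rw [hu0, hv0, sq_abs, sq_abs]; exact huv
  have hv0pos : 0 < v0 := abs_pos.mpr hv
  have hu0pos : 1 < u0 := by
    have h2 : 2 ≤ a * b := by nlinarith
    have hv2 : 1 ≤ v0 ^ 2 := by nlinarith
    nlinarith [abs_nonneg u, mul_le_mul h2 hv2 zero_le_one (by linarith : (0:ℤ) ≤ a * b)]
  -- set up the automorphism coefficients
  set P : ℤ := u0 ^ 2 - 1 with hP
  set Q : ℤ := b * u0 * v0 with hQ
  set R : ℤ := a * u0 * v0 with hR
  have hPpos : 0 < P := by nlinarith
  have hQpos : 0 < Q := by positivity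
  have hRpos : 0 < R := by nlinarith
  have hPQR : P * (P + 1) = Q * R := by
    simp only [hP, hQ, hR]; linear_combination u0 ^ 2 * huv0
  have hQR : a * Q = b * R := by rw [hQ, hR]; ring
  set f : ℕ → ℤ × ℤ := pellSeq a b P Q R with hf
  have hstep : ∀ n, f (n + 1) =
      ((2 * P + 1) * (f n).1 + 2 * Q * (f n).2 + P + Q,
       2 * R * (f n).1 + (2 * P + 1) * (f n).2 + P + R) := fun n => rfl
  -- invariants
  have hinv : ∀ n, 0 ≤ (f n).1 ∧ 0 ≤ (f n).2 ∧
      a * ((f n).1 * ((f n).1 + 1)) = b * ((f n).2 * ((f n).2 + 1)) := by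
    intro n
    induction n with
    | zero => refine ⟨le_refl 0, le_refl 0, by norm_num [hf, pellSeq]⟩
    | succ n ih =>
      obtain ⟨h1, h2, h3⟩ := ih
      rw [hstep n]
      refine ⟨by positivity, by positivity, ?_⟩
      set r := (f n).1
      set s := (f n).2
      simp only
      linear_combination h3 + ((2*P+1)*(2*r+1)*(2*s+1) + R*(2*r+1)^2 + Q*(2*s+1)^2) * hQR
        + (a*(2*r+1)^2 - b*(2*s+1)^2) * hPQR
  have hmono : StrictMono (fun n => (f n).1) := by
    apply strictMono_nat_of_lt_succ
    intro n
    have h1 := (hinv n).1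
    have h2 := (hinv n).2.1
    rw [hstep n]
    simp only
    nlinarith
  have hpos : ∀ n, 0 < (f (n + 1)).1 ∧ 0 < (f (n + 1)).2 := by
    intro n
    have h1 := (hinv n).1
    have h2 := (hinv n).2.1
    rw [hstep n]
    constructor <;> simp only <;> nlinarith
  refine Set.infinite_of_injective_forall_mem (f := fun n => f (n + 1)) ?_ ?_
  · intro m n hmn
    have := hmono.injective (congrArg Prod.fst hmn)
    omega
  · intro n
    exact ⟨(hpos n).1, (hpos n).2, (hinv (n + 1)).2.2⟩
end

section
/- Let ℓ ≥ 5 with ℓ ≡ 1 or 3 (mod 4), set q = 2ℓ − 4, and let m > 1 be a non-square integer. If there exists an integer solution (x, y) to x² − m y² = 1 with x > 0, y > 0, m y − x ≡ −1 (mod q) and x − y ≡ −1 (mod q), then there exist positive integers r, s with P(ℓ, r) = m · P(ℓ, s). -/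
/-- The r-th ℓ-gonal number. -/
def polygonal (ℓ r : ℤ) : ℤ := ((ℓ - 2) * r ^ 2 - (ℓ - 4) * r) / 2

/-- If ℓ ≥ 5, ℓ ≡ 1 or 3 (mod 4), q = 2ℓ − 4, m > 1 non-square, and there is
a solution (x, y) of x² − m y² = 1 with x, y > 0, m y − x ≡ −1 and
x − y ≡ −1 (mod q), then P(ℓ, r) = m P(ℓ, s) for some positive r, s. -/
theorem stmt_10 (ℓ m : ℤ) (hl : 5 ≤ ℓ) (hl4 : ℓ % 4 = 1 ∨ ℓ % 4 = 3)
    (hm : 1 < m) (hns : ¬ IsSquare m)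
    (h : ∃ x y : ℤ, 0 < x ∧ 0 < y ∧ x ^ 2 - m * y ^ 2 = 1 ∧
      m * y - x ≡ -1 [ZMOD (2 * ℓ - 4)] ∧ x - y ≡ -1 [ZMOD (2 * ℓ - 4)]) :
    ∃ r s : ℤ, 0 < r ∧ 0 < s ∧ polygonal ℓ r = m * polygonal ℓ s := by
  obtain ⟨x, y, hx, hy, hpell, h1, h2⟩ := h
  obtain ⟨k, hk⟩ := h1.dvd
  obtain ⟨j, hj⟩ := h2.dvd
  set K : ℤ := -k with hKdef
  set J : ℤ := -j with hJdef
  have hK : m * y - x + 1 = (2 * ℓ - 4) * K := by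
    simp only [hKdef]; linear_combination -hk
  have hJ : x - y + 1 = (2 * ℓ - 4) * J := by
    simp only [hJdef]; linear_combination -hj
  have hxmy : x < m * y := by
    by_contra h'
    push_neg at h'
    have h2' : m * y * (m * y) ≤ x * x :=
      mul_le_mul h' h' (by positivity) (le_of_lt hx)
    nlinarith
  have hxgy : y < x := by nlinarith
  have hKpos : 0 < K := by nlinarith
  have hJpos : 0 < J := by nlinarith
  refine ⟨(ℓ - 4) * K, (ℓ - 4) * J, mul_pos (by linarith) hKpos,
    mul_pos (by linarith) hJpos, ?_⟩
  set r : ℤ := (ℓ - 4) * K with hrdef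
  set s : ℤ := (ℓ - 4) * J with hsdef
  have h4 : 4 * (ℓ - 2) * ((ℓ - 2) * r ^ 2 - (ℓ - 4) * r
      - m * ((ℓ - 2) * s ^ 2 - (ℓ - 4) * s)) = 0 := by
    simp only [hrdef, hsdef]
    linear_combination (-(ℓ - 4) ^ 2 * ((2 * ℓ - 4) * K - 1 + m * y - x)) * hK
      + (m * (ℓ - 4) ^ 2 * ((2 * ℓ - 4) * J - 1 + x - y)) * hJ
      + ((1 - m) * (ℓ - 4) ^ 2) * hpell
  have hT : (ℓ - 2) * r ^ 2 - (ℓ - 4) * r = m * ((ℓ - 2) * s ^ 2 - (ℓ - 4) * s) := by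
    rcases mul_eq_zero.mp h4 with h' | h'
    · exfalso; linarith
    · linarith
  obtain ⟨a, ha⟩ := Int.even_mul_succ_self (r - 1)
  obtain ⟨b, hb⟩ := Int.even_mul_succ_self (s - 1)
  have hNr : (ℓ - 2) * r ^ 2 - (ℓ - 4) * r = 2 * ((ℓ - 2) * a + r) := by
    linear_combination (ℓ - 2) * ha
  have hNs : (ℓ - 2) * s ^ 2 - (ℓ - 4) * s = 2 * ((ℓ - 2) * b + s) := by
    linear_combination (ℓ - 2) * hb
  have pr : polygonal ℓ r = (ℓ - 2) * a + r := by
    unfold polygonal; rw [hNr]; exact Int.mul_ediv_cancel_left _ (by norm_num)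
  have ps : polygonal ℓ s = (ℓ - 2) * b + s := by
    unfold polygonal; rw [hNs]; exact Int.mul_ediv_cancel_left _ (by norm_num)
  rw [pr, ps]
  have := hT
  rw [hNr, hNs] at this
  linarith
end

section
/- There are no positive integers r, s with r(2r−1) = 2 · s(2s−1); that is, no hexagonal number is twice another hexagonal number. -/
/-- Every positive solution of x² + 1 = 2y² has y ≡ 1 (mod 4). Proof by descent. -/
lemma pell_key : ∀ n : ℕ, ∀ x y : ℤ, x ^ 2 + 1 = 2 * y ^ 2 → 0 < y → y.toNat = n →
    y % 4 = 1 := by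
  intro n
  induction n using Nat.strong_induction_on with
  | _ n ih =>
    intro x y h hy hn
    -- replace x by |x|
    set x0 := |x| with hx0
    have hx0nn : 0 ≤ x0 := abs_nonneg x
    have h0 : x0 ^ 2 + 1 = 2 * y ^ 2 := by rw [hx0, sq_abs]; exact h
    -- x0 is odd
    have hodd : x0 % 2 = 1 := by
      have hsq : Odd (x0 ^ 2) := ⟨y ^ 2 - 1, by linarith⟩
      have : Odd x0 := by
        rcases Int.even_or_odd x0 with he | ho
        · exact absurd (Int.even_pow.mpr ⟨he, two_ne_zero⟩) (Int.not_even_iff_odd.mpr hsq)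
        · exact ho
      exact Int.odd_iff.mp this
    rcases eq_or_lt_of_le (show (1:ℤ) ≤ y by omega) with h1 | h2
    · -- y = 1
      omega
    · -- y ≥ 2
      have hy2 : 2 ≤ y := h2
      -- y < x0
      have hxy : y < x0 := by nlinarith
      -- 2*x0 < 3*y
      have h23 : 2 * x0 < 3 * y := by nlinarith
      set y' := 3 * y - 2 * x0 with hy'
      set x' := 3 * x0 - 4 * y with hx'
      have h' : x' ^ 2 + 1 = 2 * y' ^ 2 := by linear_combination h0
      have hy'pos : 0 < y' := by omega
      have hy'lt : y' < y := by omega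
      have := ih y'.toNat (by omega) x' y' h' hy'pos rfl
      omega

/-- No hexagonal number is twice another hexagonal number. -/
theorem stmt_11 :
    ¬ ∃ r s : ℤ, 0 < r ∧ 0 < s ∧ r * (2 * r - 1) = 2 * (s * (2 * s - 1)) := by
  rintro ⟨r, s, hr, hs, h⟩
  have hpell : (4 * r - 1) ^ 2 + 1 = 2 * (4 * s - 1) ^ 2 := by linear_combination 8 * h
  have hy : 0 < 4 * s - 1 := by omega
  have := pell_key (4 * s - 1).toNat (4 * r - 1) (4 * s - 1) hpell hy rfl
  omega
end

section
/- The pentagonal numbers P(5, r) = r(3r−1)/2 that are twice another pentagonal number are in bijection with the positive integer solutions of x² − 2y² = −1 with x ≡ y ≡ 5 (mod 6) (via x = 6r − 1, y = 6s − 1 where P(5, r) = 2P(5, s)). -/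
/-- The r-th pentagonal number. -/
def pentagonalNum (r : ℤ) : ℤ := r * (3 * r - 1) / 2

lemma two_pentagonal (r : ℤ) : 2 * pentagonalNum r = r * (3 * r - 1) := by
  have h : (2:ℤ) ∣ r * (3 * r - 1) := by
    rcases Int.even_or_odd r with ⟨k, hk⟩ | ⟨k, hk⟩
    · exact ⟨k * (3 * r - 1), by rw [hk]; ring⟩
    · exact ⟨r * (3 * k + 1), by rw [hk]; ring⟩
  unfold pentagonalNum
  rw [mul_comm, Int.ediv_mul_cancel h]

/-- The map (r, s) ↦ (6r − 1, 6s − 1) is a bijection between pairs of positive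
integers with P(5, r) = 2 P(5, s) and positive solutions of x² − 2y² = −1 with
x ≡ y ≡ 5 (mod 6). -/
theorem stmt_14 :
    Set.BijOn (fun p : ℤ × ℤ => (6 * p.1 - 1, 6 * p.2 - 1))
      {p : ℤ × ℤ | 0 < p.1 ∧ 0 < p.2 ∧ pentagonalNum p.1 = 2 * pentagonalNum p.2}
      {q : ℤ × ℤ | 0 < q.1 ∧ 0 < q.2 ∧ q.1 ^ 2 - 2 * q.2 ^ 2 = -1 ∧
        q.1 ≡ 5 [ZMOD 6] ∧ q.2 ≡ 5 [ZMOD 6]} := by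
  refine ⟨?_, ?_, ?_⟩
  · rintro ⟨r, s⟩ ⟨hr, hs, heq⟩
    have key : r * (3 * r - 1) = 2 * (s * (3 * s - 1)) := by
      rw [← two_pentagonal r, ← two_pentagonal s, heq]
    simp only [Set.mem_setOf_eq]
    refine ⟨by omega, by omega, by linear_combination 12 * key, ?_, ?_⟩
    · show (6 * r - 1) % 6 = 5 % 6; omega
    · show (6 * s - 1) % 6 = 5 % 6; omega
  · rintro ⟨r, s⟩ _ ⟨r', s'⟩ _ h
    simp only [Prod.mk.injEq] at h
    exact Prod.ext (by omega) (by omega)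
  · rintro ⟨x, y⟩ ⟨hx, hy, heq, hx6, hy6⟩
    have hx6' : x % 6 = 5 := by have := hx6; unfold Int.ModEq at this; omega
    have hy6' : y % 6 = 5 := by have := hy6; unfold Int.ModEq at this; omega
    refine ⟨((x + 1) / 6, (y + 1) / 6), ⟨by omega, by omega, ?_⟩, ?_⟩
    · show pentagonalNum ((x + 1) / 6) = 2 * pentagonalNum ((y + 1) / 6)
      have hr : 6 * ((x + 1) / 6) = x + 1 := by omega
      have hs2 : 6 * ((y + 1) / 6) = y + 1 := by omega
      set r := (x + 1) / 6
      set s := (y + 1) / 6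
      have key : r * (3 * r - 1) = 2 * (s * (3 * s - 1)) := by
        have : (6 * r - 1) ^ 2 - 2 * (6 * s - 1) ^ 2 = -1 := by
          rw [hr, hs2]; linarith [heq]
        nlinarith [this]
      have h1 := two_pentagonal r
      have h2 := two_pentagonal s
      omega
    · simp only [Prod.mk.injEq]
      constructor <;> omega
end

section
/- There exist infinitely many pairs of positive integers (r, s) with r(3r−1)/2 = 2 · s(3s−1)/2; that is, infinitely many pentagonal numbers are twice another pentagonal number. -/
def pentF : ℕ → ℤ × ℤ
  | 0 => (7, 5)
  | n + 1 =>
    let p := pentF n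
    (577 * p.1 + 816 * p.2 - 232, 408 * p.1 + 577 * p.2 - 164)

lemma pentF_mem (n : ℕ) : 0 < (pentF n).1 ∧ 0 < (pentF n).2 ∧
    (pentF n).1 * (3 * (pentF n).1 - 1) = 2 * ((pentF n).2 * (3 * (pentF n).2 - 1)) := by
  induction n with
  | zero => norm_num [pentF]
  | succ n ih =>
    obtain ⟨h1, h2, h3⟩ := ih
    refine ⟨by simp only [pentF]; linarith, by simp only [pentF]; linarith, ?_⟩
    simp only [pentF]
    linear_combination h3

lemma pentF_strictMono : StrictMono (fun n => (pentF n).1) := by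
  apply strictMono_nat_of_lt_succ
  intro n
  obtain ⟨h1, h2, _⟩ := pentF_mem n
  simp only [pentF]
  linarith

/-- Infinitely many pentagonal numbers are twice another pentagonal number. -/
theorem stmt_15 :
    {p : ℤ × ℤ | 0 < p.1 ∧ 0 < p.2 ∧
      p.1 * (3 * p.1 - 1) = 2 * (p.2 * (3 * p.2 - 1))}.Infinite := by
  refine Set.infinite_of_injective_forall_mem (f := pentF) ?_ pentF_mem
  intro m n h
  exact pentF_strictMono.injective (by rw [h])
end

section
/- If positive integers r, s, t satisfy (ar−b)² − m(as−b)² = −(m−1)b² and (ar−b)² − n(at−b)² = −(n−1)b², then with u = ar−b, v = as−b, w = at−b, X = m²n v², and Y = m²n² u v w, one has Y² = X(X − mn(m−1)b²)(X − mn(m−n)b²). -/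
/-- If (ar−b)² − m(as−b)² = −(m−1)b² and (ar−b)² − n(at−b)² = −(n−1)b², then
with u = ar−b, v = as−b, w = at−b, X = m²n v², Y = m²n² u v w, one has
Y² = X(X − mn(m−1)b²)(X − mn(m−n)b²). -/
theorem stmt_17 (a b m n r s t : ℤ) (hmn : n < m) (hn : 1 < n)
    (hr : 0 < r) (hs : 0 < s) (ht : 0 < t)
    (h1 : (a * r - b) ^ 2 - m * (a * s - b) ^ 2 = -(m - 1) * b ^ 2)
    (h2 : (a * r - b) ^ 2 - n * (a * t - b) ^ 2 = -(n - 1) * b ^ 2)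
    (u v w X Y : ℤ)
    (hu : u = a * r - b) (hv : v = a * s - b) (hw : w = a * t - b)
    (hX : X = m ^ 2 * n * v ^ 2) (hY : Y = m ^ 2 * n ^ 2 * u * v * w) :
    Y ^ 2 = X * (X - m * n * (m - 1) * b ^ 2)
              * (X - m * n * (m - n) * b ^ 2) := by
  have k1 : X - m * n * (m - 1) * b ^ 2 = m * n * u ^ 2 := by
    subst hu hv hX; linear_combination -(m * n) * h1
  have k2 : X - m * n * (m - n) * b ^ 2 = m * n ^ 2 * w ^ 2 := by
    subst hu hv hw hX; linear_combination -(m * n) * h1 + m * n * h2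
  rw [k1, k2, hX, hY]; ring
end
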